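/- For every l ∈ ℕ, the graph F_{2^l} is a tree (it is connected and contains no cycle), whereas for every odd prime p and every l ∈ ℕ, the graph F_{p^l} is not a tree: it contains a cycle (for instance ∞ → 1/p^l → 2/p^l → ∞). -/

import Mathlib

/-- Membership in the vertex set `X_N`: a pair `(p, q)` of integers represents the
reduced fraction `p/q` with `q ≥ 0`, `gcd(p, q) = 1` and `N ∣ q`; the pair `(1, 0)`
represents `∞ = 1/0`. -/
def memX (N : ℕ) (v : ℤ × ℤ) : Prop :=
  0 ≤ v.2 ∧ IsCoprime v.1 v.2 ∧ (N : ℤ) ∣ v.2 ∧ (v.2 = 0 → v.1 = 1)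

/-- The vertex set `X_N` of the graph `F_N`. -/
def X (N : ℕ) : Type := {v : ℤ × ℤ // memX N v}

/-- The vertex `∞ = 1/0`. -/
def infty (N : ℕ) : X N :=
  ⟨(1, 0), ⟨le_refl 0, isCoprime_one_left, dvd_zero _, fun _ => rfl⟩⟩

/-- The value of a vertex as a rational number (`∞` is sent to junk). -/
def fval {N : ℕ} (v : X N) : ℚ := (v.1.1 : ℚ) / (v.1.2 : ℚ)

/-- The graph `F_N`: two vertices `p/q` and `r/s` (in lowest terms, with `∞ = 1/0`)
are adjacent if and only if `r*q - s*p = ±N`. -/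
def FareyGraph (N : ℕ) : SimpleGraph (X N) where
  Adj v w := v ≠ w ∧ (w.1.1 * v.1.2 - w.1.2 * v.1.1 = (N : ℤ) ∨
      w.1.1 * v.1.2 - w.1.2 * v.1.1 = -(N : ℤ))
  symm := ⟨by
    rintro v w ⟨hne, h | h⟩
    · exact ⟨hne.symm, Or.inr (by linear_combination -h)⟩
    · exact ⟨hne.symm, Or.inl (by linear_combination -h)⟩⟩
  loopless := ⟨by rintro v ⟨hne, -⟩; exact hne rfl⟩



private lemma odd_abs' {r : ℤ} (h : Odd r) : Odd |r| := by
  rcases abs_choice r with h' | h' <;> rw [h']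
  · exact h
  · exact h.neg

private lemma parity_edge {a b₁ r s₁ : ℤ} (ha : Odd a) (hr : Odd r)
    (he : r * b₁ - s₁ * a = 1 ∨ r * b₁ - s₁ * a = -1) : Odd (s₁ + b₁) := by
  obtain ⟨α, hα⟩ := ha
  obtain ⟨ρ, hρ⟩ := hr
  rcases he with h | h
  · exact ⟨-ρ * b₁ + α * s₁ + s₁, by linear_combination h - b₁ * hρ + s₁ * hα⟩
  · exact ⟨-ρ * b₁ + α * s₁ + s₁ - 1, by linear_combination h - b₁ * hρ + s₁ * hα⟩

private lemma core_exists {a b₁ : ℤ} (ha : Odd a) (hb₁ : 1 ≤ b₁) (hcop : IsCoprime a b₁) :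
    ∃ r s₁ : ℤ, Odd r ∧ 0 ≤ s₁ ∧ (s₁ = 0 → r = 1) ∧ IsCoprime r s₁ ∧
      (r * b₁ - s₁ * a = 1 ∨ r * b₁ - s₁ * a = -1) ∧ |r| + s₁ < |a| + b₁ := by
  have ha0 : a ≠ 0 := by rintro rfl; simp [Int.odd_iff] at ha
  have haa : 1 ≤ |a| := Int.one_le_abs ha0
  have hb₁0 : b₁ ≠ 0 := by omega
  obtain ⟨x, y, hxy⟩ := hcop
  set s₀ : ℤ := (-x) % b₁ with hs₀def
  set t : ℤ := (-x) / b₁ with htdef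
  have hdiv : -x = b₁ * t + s₀ := (Int.mul_ediv_add_emod (-x) b₁).symm
  have hs₀0 : 0 ≤ s₀ := Int.emod_nonneg _ hb₁0
  have hs₀lt : s₀ < b₁ := Int.emod_lt_of_pos _ (by omega)
  set r₀ : ℤ := y - t * a with hr₀def
  have hedge : r₀ * b₁ - s₀ * a = 1 := by
    have hs : s₀ = -x - b₁ * t := by linarith
    rw [hr₀def, hs]; linear_combination hxy
  rcases Int.even_or_odd r₀ with he | ho
  · -- r₀ even: use (a - r₀, b₁ - s₀)
    have hs₀1 : 1 ≤ s₀ := by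
      rcases eq_or_lt_of_le hs₀0 with h0 | h0
      · exfalso
        have hs0 : s₀ = 0 := h0.symm
        have hmul : r₀ * b₁ = 1 := by rw [hs0] at hedge; linarith
        rcases Int.mul_eq_one_iff_eq_one_or_neg_one.mp hmul with ⟨h, _⟩ | ⟨h, _⟩ <;>
          rw [h] at he <;> simp [Int.even_iff] at he
      · omega
    refine ⟨a - r₀, b₁ - s₀, ha.sub_even he, by omega, fun h => absurd h (by omega),
      ⟨-b₁, a, by linear_combination hedge⟩, Or.inr (by linear_combination -hedge), ?_⟩
    rcases lt_or_gt_of_ne ha0 with hneg | hpos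
    · -- a < 0 : a < r₀ ≤ 0
      have h1 : r₀ ≤ 0 := by nlinarith
      have h2 : a < r₀ := by nlinarith
      have : |a - r₀| = r₀ - a := by rw [abs_of_nonpos (by omega)]; ring
      rw [this, abs_of_neg hneg]; omega
    · -- a > 0 : 0 < r₀ ≤ a
      have h1 : 0 < r₀ := by nlinarith
      have h2 : r₀ ≤ a := by nlinarith
      have : |a - r₀| = a - r₀ := abs_of_nonneg (by omega)
      rw [this, abs_of_pos hpos]; omega
  · -- r₀ odd : use (r₀, s₀)
    have hr₀a : |r₀| ≤ |a| := by
      have h1 : r₀ * b₁ = 1 + s₀ * a := by linarith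
      have h2 : |r₀ * b₁| ≤ 1 + s₀ * |a| := by
        rw [h1]
        calc |1 + s₀ * a| ≤ |1| + |s₀ * a| := abs_add_le _ _
          _ = 1 + s₀ * |a| := by rw [abs_one, abs_mul, abs_of_nonneg hs₀0]
      rw [abs_mul, abs_of_pos (by omega : (0:ℤ) < b₁)] at h2
      by_contra hcon
      push_neg at hcon
      nlinarith [mul_le_mul_of_nonneg_right (by omega : s₀ ≤ b₁ - 1) (abs_nonneg a),
        mul_le_mul_of_nonneg_right (by omega : |a| + 1 ≤ |r₀|) (by omega : (0:ℤ) ≤ b₁)]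
    refine ⟨r₀, s₀, ho, hs₀0, ?_, ⟨b₁, -a, by linear_combination hedge⟩, Or.inl hedge, by omega⟩
    intro h0
    have hmul : r₀ * b₁ = 1 := by rw [h0] at hedge; linarith
    rcases Int.mul_eq_one_iff_eq_one_or_neg_one.mp hmul with ⟨h, _⟩ | ⟨_, h⟩
    · exact h
    · omega

private lemma case_bound2 {a b₁ R S R' S' k : ℤ} (hb₁ : 1 ≤ b₁)
    (hk : 1 ≤ k) (habs : 2 * k * |a| ≤ |R| + |R'|)
    (hS : S + S' = 2 * k * b₁)
    (fR : |R| + S ≤ |a| + b₁) (fR' : |R'| + S' ≤ |a| + b₁)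
    (hoR : Odd |R|) (hoa : Odd |a|) (hpar : Odd (S + b₁)) : False := by
  have e1 : 2 * |a| ≤ 2 * k * |a| := by nlinarith [abs_nonneg a]
  have e2 : 2 * b₁ ≤ 2 * k * b₁ := by nlinarith
  have heq : |R| + S = |a| + b₁ := le_antisymm fR (by linarith)
  obtain ⟨u, hu⟩ := hoR
  obtain ⟨w, hw⟩ := hoa
  obtain ⟨z, hz⟩ := hpar
  rw [hu, hw] at heq
  omega

private lemma case_bound {a b₁ R S R' S' k : ℤ} (hb₁ : 1 ≤ b₁)
    (hk : 1 ≤ k) (habs : 2 * k * |a| - |R'| ≤ |R|)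
    (hS : S = S' + 2 * k * b₁) (hS' : 0 ≤ S')
    (fR : |R| + S ≤ |a| + b₁) (fR' : |R'| + S' ≤ |a| + b₁)
    (hoR : Odd |R|) (hoa : Odd |a|) (hpar : Odd (S + b₁)) : False := by
  have e1 : 2 * |a| ≤ 2 * k * |a| := by nlinarith [abs_nonneg a]
  have e2 : 2 * b₁ ≤ 2 * k * b₁ := by nlinarith
  have heq : |R| + S = |a| + b₁ := le_antisymm fR (by linarith)
  obtain ⟨u, hu⟩ := hoR
  obtain ⟨w, hw⟩ := hoa
  obtain ⟨z, hz⟩ := hpar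
  rw [hu, hw] at heq
  omega

private lemma core_unique (l : ℕ) {a b r s r' s' : ℤ}
    (ha : Odd a) (hr : Odd r) (hr' : Odd r')
    (hb0 : 0 ≤ b) (hs0 : 0 ≤ s) (hs'0 : 0 ≤ s')
    (hcop : IsCoprime a b)
    (hroot : b = 0 → a = 1) (hroot1 : s = 0 → r = 1) (hroot2 : s' = 0 → r' = 1)
    (hdb : (2 ^ l : ℤ) ∣ b) (hds : (2 ^ l : ℤ) ∣ s) (hds' : (2 ^ l : ℤ) ∣ s')
    (e1 : r * b - s * a = 2 ^ l ∨ r * b - s * a = -2 ^ l)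
    (e2 : r' * b - s' * a = 2 ^ l ∨ r' * b - s' * a = -2 ^ l)
    (f1 : 2 ^ l * |r| + s ≤ 2 ^ l * |a| + b)
    (f2 : 2 ^ l * |r'| + s' ≤ 2 ^ l * |a| + b) : r = r' ∧ s = s' := by
  set N : ℤ := 2 ^ l with hN
  have hNpos : 0 < N := by positivity
  obtain ⟨b₁, hb⟩ := hdb
  obtain ⟨s₁, hs⟩ := hds
  obtain ⟨s₁', hs'⟩ := hds'
  have ha0 : a ≠ 0 := by rintro rfl; simp [Int.odd_iff] at ha
  have haa : 1 ≤ |a| := Int.one_le_abs ha0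
  rcases eq_or_lt_of_le hb0 with hb0' | hbpos
  · -- b = 0 : impossible together with f1
    exfalso
    have hbz : b = 0 := hb0'.symm
    have ha1 : a = 1 := hroot hbz
    have habs : |r| ≤ 0 := by
      have hsN : s = N := by
        rcases e1 with h | h <;> rw [hbz, ha1] at h <;> simp at h <;> omega
      rw [hbz, ha1, abs_one] at f1
      nlinarith
    have : r = 0 := abs_eq_zero.mp (le_antisymm habs (abs_nonneg r))
    rw [this] at hr; simp [Int.odd_iff] at hr
  · -- b > 0
    have hb₁ : 1 ≤ b₁ := by nlinarith
    have hb₁0 : b₁ ≠ 0 := by omega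
    have e1' : r * b₁ - s₁ * a = 1 ∨ r * b₁ - s₁ * a = -1 := by
      rcases e1 with h | h
      · exact Or.inl (mul_left_cancel₀ hNpos.ne' (by rw [hb, hs] at h; linear_combination h))
      · exact Or.inr (mul_left_cancel₀ hNpos.ne' (by rw [hb, hs] at h; linear_combination h))
    have e2' : r' * b₁ - s₁' * a = 1 ∨ r' * b₁ - s₁' * a = -1 := by
      rcases e2 with h | h
      · exact Or.inl (mul_left_cancel₀ hNpos.ne' (by rw [hb, hs'] at h; linear_combination h))
      · exact Or.inr (mul_left_cancel₀ hNpos.ne' (by rw [hb, hs'] at h; linear_combination h))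
    have f1' : |r| + s₁ ≤ |a| + b₁ := by
      have : N * (|r| + s₁) ≤ N * (|a| + b₁) := by rw [hb, hs] at f1; linarith
      exact le_of_mul_le_mul_left this hNpos
    have f2' : |r'| + s₁' ≤ |a| + b₁ := by
      have : N * (|r'| + s₁') ≤ N * (|a| + b₁) := by rw [hb, hs'] at f2; linarith
      exact le_of_mul_le_mul_left this hNpos
    have hs₁0 : 0 ≤ s₁ := by nlinarith [hs ▸ hs0]
    have hs₁'0 : 0 ≤ s₁' := by nlinarith [hs' ▸ hs'0]
    have hsr : s₁ = 0 → r = 1 := fun h => hroot1 (by rw [hs, h, mul_zero])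
    have hsr' : s₁' = 0 → r' = 1 := fun h => hroot2 (by rw [hs', h, mul_zero])
    have par1 : Odd (s₁ + b₁) := parity_edge ha hr e1'
    have par2 : Odd (s₁' + b₁) := parity_edge ha hr' e2'
    have hcop₁ : IsCoprime a b₁ := hcop.of_isCoprime_of_dvd_right ⟨N, by rw [hb]; ring⟩
    have hoa : Odd |a| := odd_abs' ha
    -- same-sign subcase, fully parameterized
    have same_sign : ∀ R S R' S' : ℤ, Odd R → Odd R' → 0 ≤ S → 0 ≤ S' →
        |R| + S ≤ |a| + b₁ → |R'| + S' ≤ |a| + b₁ → Odd (S + b₁) → Odd (S' + b₁) →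
        (R - R') * b₁ = (S - S') * a → R = R' ∧ S = S' := by
      intro R S R' S' hR hR' hS0 hS'0 fR fR' pR pR' hsub
      have hdvd1 : b₁ ∣ (S - S') :=
        hcop₁.symm.dvd_of_dvd_mul_right ⟨R - R', by linear_combination -hsub⟩
      obtain ⟨m, hm⟩ := hdvd1
      have hra : R - R' = m * a :=
        mul_right_cancel₀ hb₁0 (by linear_combination hsub + a * hm)
      have hmev : Even m := by
        have hev : Even (m * a) := hra ▸ hR.sub_odd hR'
        rcases Int.even_mul.mp hev with h | h
        · exact h
        · exact absurd ha (Int.not_odd_iff_even.mpr h)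
      obtain ⟨k, hk⟩ := hmev
      have hmk : m = 2 * k := by omega
      rcases lt_trichotomy k 0 with hkneg | hk0 | hkpos
      · exfalso
        refine case_bound (a := a) (R := R') (S := S') (R' := R) (S' := S) (k := -k)
          hb₁ (by omega) ?_ (by linear_combination -hm - b₁ * hmk) hS0 fR' fR
          (odd_abs' hR') hoa pR'
        have habs2 : |R' - R| = 2 * (-k) * |a| := by
          rw [show R' - R = (2 * (-k)) * a by linear_combination -hra - a * hmk, abs_mul,
            abs_of_nonneg (by omega : (0:ℤ) ≤ 2 * (-k))]
        have h3 := abs_sub_abs_le_abs_sub (R' - R) (-R)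
        rw [abs_neg, sub_neg_eq_add, sub_add_cancel, habs2] at h3
        linarith
      · have hm0 : m = 0 := by omega
        rw [hm0] at hra hm
        constructor <;> [linarith [hra]; linarith [hm]]
      · exfalso
        refine case_bound (a := a) (R := R) (S := S) (R' := R') (S' := S') (k := k)
          hb₁ (by omega) ?_ (by linear_combination hm + b₁ * hmk) hS'0 fR fR'
          (odd_abs' hR) hoa pR
        have habs2 : |R - R'| = 2 * k * |a| := by
          rw [show R - R' = (2 * k) * a by linear_combination hra + a * hmk, abs_mul,
            abs_of_nonneg (by omega : (0:ℤ) ≤ 2 * k)]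
        have h3 := abs_sub_abs_le_abs_sub (R - R') (-R')
        rw [abs_neg, sub_neg_eq_add, sub_add_cancel, habs2] at h3
        linarith
    -- opposite-sign subcase
    have opp_sign : ∀ R S R' S' : ℤ, Odd R → Odd R' → 0 ≤ S → 0 ≤ S' →
        (S = 0 → R = 1) → (S' = 0 → R' = 1) →
        |R| + S ≤ |a| + b₁ → |R'| + S' ≤ |a| + b₁ → Odd (S + b₁) →
        (R + R') * b₁ = (S + S') * a → False := by
      intro R S R' S' hR hR' hS0 hS'0 hRroot hR'root fR fR' pR hadd
      have hdvd1 : b₁ ∣ (S + S') :=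
        hcop₁.symm.dvd_of_dvd_mul_right ⟨R + R', by linear_combination -hadd⟩
      obtain ⟨m, hm⟩ := hdvd1
      have hra : R + R' = m * a :=
        mul_right_cancel₀ hb₁0 (by linear_combination hadd + a * hm)
      have hmev : Even m := by
        have hev : Even (m * a) := hra ▸ hR.add_odd hR'
        rcases Int.even_mul.mp hev with h | h
        · exact h
        · exact absurd ha (Int.not_odd_iff_even.mpr h)
      obtain ⟨k, hk⟩ := hmev
      have hmk : m = 2 * k := by omega
      have hkk : 0 ≤ k := by nlinarith
      rcases eq_or_lt_of_le hkk with hk0 | hkpos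
      · have hm0 : m = 0 := by omega
        rw [hm0] at hra hm
        have hSz : S = 0 := by linarith [hm]
        have hS'z : S' = 0 := by linarith [hm]
        rw [hRroot hSz, hR'root hS'z] at hra
        norm_num at hra
      · refine case_bound2 (a := a) (R := R) (S := S) (R' := R') (S' := S') (k := k)
          hb₁ (by omega) ?_ (by linear_combination hm + b₁ * hmk) fR fR'
          (odd_abs' hR) hoa pR
        have habs2 : |R + R'| = 2 * k * |a| := by
          rw [show R + R' = (2 * k) * a by linear_combination hra + a * hmk, abs_mul,
            abs_of_nonneg (by omega : (0:ℤ) ≤ 2 * k)]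
        calc 2 * k * |a| = |R + R'| := habs2.symm
          _ ≤ |R| + |R'| := abs_add_le _ _
    rcases e1' with h1 | h1 <;> rcases e2' with h2 | h2
    · obtain ⟨h, h'⟩ := same_sign r s₁ r' s₁' hr hr' hs₁0 hs₁'0 f1' f2' par1 par2
        (by linear_combination h1 - h2)
      exact ⟨h, by rw [hs, hs', h']⟩
    · exact absurd (opp_sign r s₁ r' s₁' hr hr' hs₁0 hs₁'0 hsr hsr' f1' f2' par1
        (by linear_combination h1 + h2)) not_false
    · exact absurd (opp_sign r s₁ r' s₁' hr hr' hs₁0 hs₁'0 hsr hsr' f1' f2' par1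
        (by linear_combination h1 + h2)) not_false
    · obtain ⟨h, h'⟩ := same_sign r s₁ r' s₁' hr hr' hs₁0 hs₁'0 f1' f2' par1 par2
        (by linear_combination h1 - h2)
      exact ⟨h, by rw [hs, hs', h']⟩

namespace FareyTree

/-- weight function -/
def F {N : ℕ} (v : X N) : ℕ := N * v.1.1.natAbs + v.1.2.toNat

lemma F_cast {N : ℕ} (v : X N) : (F v : ℤ) = (N : ℤ) * |v.1.1| + v.1.2 := by
  have h := v.2.1
  simp [F, Int.natCast_natAbs, Int.toNat_of_nonneg h]

lemma cast_pow (l : ℕ) : (((2 ^ l : ℕ) : ℤ)) = 2 ^ l := by push_cast; ring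

lemma odd_fst {l : ℕ} (v : X (2 ^ l)) (hl : 1 ≤ l) : Odd v.1.1 := by
  obtain ⟨hb, hcop, hdvd, h0⟩ := v.2
  rcases eq_or_ne v.1.2 0 with h | h
  · rw [h0 h]; exact odd_one
  · by_contra hev
    rw [Int.not_odd_iff_even] at hev
    have h2a : (2 : ℤ) ∣ v.1.1 := hev.two_dvd
    have h2b : (2 : ℤ) ∣ v.1.2 := by
      refine dvd_trans ?_ hdvd
      rw [cast_pow]
      exact dvd_pow_self 2 (by omega)
    have := Int.isUnit_iff.mp (hcop.isUnit_of_dvd' h2a h2b)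
    omega
  
lemma eq_infty_of_snd_eq_zero {N : ℕ} (v : X N) (h : v.1.2 = 0) : v = infty N := by
  apply Subtype.ext
  have h1 : v.1.1 = 1 := v.2.2.2.2 h
  show v.1 = (1, 0)
  rw [Prod.ext_iff]
  exact ⟨h1, h⟩

lemma exists_parent {l : ℕ} (hl : 1 ≤ l) (v : X (2 ^ l)) (hv : v ≠ infty (2 ^ l)) :
    ∃ u : X (2 ^ l), (FareyGraph (2 ^ l)).Adj v u ∧ F u < F v := by
  set N : ℤ := 2 ^ l with hN
  have hNpos : 0 < N := by positivity
  obtain ⟨hb0, hcop, hdvd, h0⟩ := v.2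
  have hbne : v.1.2 ≠ 0 := fun h => hv (eq_infty_of_snd_eq_zero v h)
  have hbpos : 0 < v.1.2 := lt_of_le_of_ne hb0 (Ne.symm hbne)
  have hdvd' : N ∣ v.1.2 := by rw [hN, ← cast_pow l]; exact hdvd
  obtain ⟨b₁, hb⟩ := hdvd'
  have hb₁ : 1 ≤ b₁ := by nlinarith
  have ha : Odd v.1.1 := odd_fst v hl
  have hcop₁ : IsCoprime v.1.1 b₁ := hcop.of_isCoprime_of_dvd_right ⟨N, by rw [hb]; ring⟩
  obtain ⟨r, s₁, hrodd, hs₁0, hs₁root, hcoprs, hedge, hlt⟩ := core_exists ha hb₁ hcop₁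
  have hmem : memX (2 ^ l) (r, N * s₁) := by
    refine ⟨by positivity, ?_, ⟨s₁, by rw [cast_pow]⟩, fun h => ?_⟩
    · -- IsCoprime r (N * s₁)
      apply IsCoprime.mul_right _ hcoprs
      obtain ⟨ρ, hρ⟩ := hrodd
      have : IsCoprime r 2 := ⟨1, -ρ, by linarith⟩
      rw [hN]
      exact this.pow_right
    · have : s₁ = 0 := by
        simp only at h
        rcases mul_eq_zero.mp h with h' | h'
        · omega
        · exact h'
      exact hs₁root this
  have hFlt : F (⟨(r, N * s₁), hmem⟩ : X (2 ^ l)) < F v := by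
    have hcast : (F (⟨(r, N * s₁), hmem⟩ : X (2 ^ l)) : ℤ) < (F v : ℤ) := by
      have e1 := F_cast (⟨(r, N * s₁), hmem⟩ : X (2 ^ l))
      rw [e1, F_cast v, cast_pow, ← hN]
      show N * |r| + N * s₁ < N * |v.1.1| + v.1.2
      rw [hb]
      nlinarith
    exact_mod_cast hcast
  refine ⟨⟨(r, N * s₁), hmem⟩, ⟨?_, ?_⟩, hFlt⟩
  · -- ≠
    intro hequ
    rw [hequ] at hFlt
    exact lt_irrefl _ hFlt
  · -- determinant
    show r * v.1.2 - N * s₁ * v.1.1 = ((2^l : ℕ) : ℤ) ∨ _ = -((2^l : ℕ):ℤ)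
    rw [cast_pow, ← hN, hb]
    rcases hedge with h | h
    · exact Or.inl (by linear_combination N * h)
    · exact Or.inr (by linear_combination N * h)

lemma unique_small {l : ℕ} (hl : 1 ≤ l) (v u u' : X (2 ^ l))
    (h1 : (FareyGraph (2 ^ l)).Adj v u) (h2 : (FareyGraph (2 ^ l)).Adj v u')
    (g1 : F u ≤ F v) (g2 : F u' ≤ F v) : u = u' := by
  obtain ⟨hb0, hcop, hdb, hroot⟩ := v.2
  obtain ⟨hs0, hcops, hds, hroot1⟩ := u.2
  obtain ⟨hs'0, hcops', hds', hroot2⟩ := u'.2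
  have hdb' : (2 ^ l : ℤ) ∣ v.1.2 := by rw [← cast_pow l]; exact hdb
  have hds2 : (2 ^ l : ℤ) ∣ u.1.2 := by rw [← cast_pow l]; exact hds
  have hds2' : (2 ^ l : ℤ) ∣ u'.1.2 := by rw [← cast_pow l]; exact hds'
  have e1 := h1.2
  have e2 := h2.2
  rw [cast_pow] at e1 e2
  have g1' : (2:ℤ) ^ l * |u.1.1| + u.1.2 ≤ 2 ^ l * |v.1.1| + v.1.2 := by
    have h := (Int.ofNat_le.mpr g1)
    rwa [F_cast, F_cast, cast_pow] at h
  have g2' : (2:ℤ) ^ l * |u'.1.1| + u'.1.2 ≤ 2 ^ l * |v.1.1| + v.1.2 := by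
    have h := (Int.ofNat_le.mpr g2)
    rwa [F_cast, F_cast, cast_pow] at h
  obtain ⟨hfst, hsnd⟩ := core_unique l (odd_fst v hl) (odd_fst u hl) (odd_fst u' hl)
    hb0 hs0 hs'0 hcop hroot hroot1 hroot2 hdb' hds2 hds2' e1 e2 g1' g2'
  apply Subtype.ext
  rw [Prod.ext_iff]
  exact ⟨hfst, hsnd⟩

lemma reachable_infty {l : ℕ} (hl : 1 ≤ l) (v : X (2 ^ l)) :
    (FareyGraph (2 ^ l)).Reachable v (infty (2 ^ l)) := by
  obtain ⟨n, hn⟩ : ∃ n, F v ≤ n := ⟨F v, le_refl _⟩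
  induction n generalizing v with
  | zero =>
    rcases eq_or_ne v (infty (2 ^ l)) with h | h
    · rw [h]
    · obtain ⟨u, hadj, hFu⟩ := exists_parent hl v h
      omega
  | succ n ih =>
    rcases eq_or_ne v (infty (2 ^ l)) with h | h
    · rw [h]
    · obtain ⟨u, hadj, hFu⟩ := exists_parent hl v h
      exact (hadj.reachable).trans (ih u (by omega))

lemma connected {l : ℕ} (hl : 1 ≤ l) : (FareyGraph (2 ^ l)).Connected := by
  have : Nonempty (X (2 ^ l)) := ⟨infty (2 ^ l)⟩
  exact ⟨fun u v => (reachable_infty hl u).trans (reachable_infty hl v).symm⟩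

open SimpleGraph Walk in
lemma acyclic {l : ℕ} (hl : 1 ≤ l) : (FareyGraph (2 ^ l)).IsAcyclic := by
  classical
  intro v c hc
  -- find a vertex of maximal weight on the cycle
  obtain ⟨m, hmmem, hmax⟩ := Finset.exists_max_image c.support.toFinset F
    ⟨v, List.mem_toFinset.mpr c.start_mem_support⟩
  rw [List.mem_toFinset] at hmmem
  have hc' : (c.rotate m hmmem).IsCycle := hc.rotate hmmem
  have hmax' : ∀ x ∈ (c.rotate m hmmem).support, F x ≤ F m := by
    intro x hx
    rcases List.eq_or_mem_of_mem_cons ((c.rotate m hmmem).support_eq_cons ▸ hx) with h | h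
    · exact h ▸ le_refl _
    · have := (support_rotate c m hmmem).mem_iff.mp h
      exact hmax x (List.mem_toFinset.mpr (List.mem_of_mem_tail this))
  set c' := c.rotate m hmmem with hc'def
  obtain ⟨u, hmu, p, hpeq⟩ := Walk.not_nil_iff.mp hc'.not_nil
  have hple : 2 ≤ p.length := by
    have h3 := hc'.three_le_length
    rw [hpeq] at h3
    simpa using h3
  have hppath : p.IsPath := ((Walk.cons_isCycle_iff p hmu).mp (hpeq ▸ hc')).1
  have hrevnil : ¬ p.reverse.Nil := by
    rw [Walk.not_nil_iff_lt_length, Walk.length_reverse]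
    omega
  obtain ⟨w, hmw, p₂, hp₂eq⟩ := Walk.not_nil_iff.mp hrevnil
  have huw : u ≠ w := by
    intro huweq
    subst huweq
    have hrevpath : p.reverse.IsPath := hppath.reverse
    rw [hp₂eq] at hrevpath
    have h2 := (Walk.cons_isPath_iff hmw p₂).mp hrevpath
    have hnil : p₂ = Walk.nil := (Walk.isPath_iff_eq_nil (p := p₂)).mp h2.1
    have hlen : p.reverse.length = p₂.length + 1 := by rw [hp₂eq]; simp
    rw [hnil, Walk.length_reverse] at hlen
    simp at hlen
    omega
  -- memberships
  have humem : u ∈ c'.support := by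
    rw [hpeq, Walk.support_cons]
    exact List.mem_cons_of_mem _ p.start_mem_support
  have hwmem : w ∈ c'.support := by
    rw [hpeq, Walk.support_cons]
    apply List.mem_cons_of_mem
    have : w ∈ p.reverse.support := by
      rw [hp₂eq, Walk.support_cons]
      exact List.mem_cons_of_mem _ p₂.start_mem_support
    rwa [Walk.support_reverse, List.mem_reverse] at this
  exact huw (unique_small hl m u w hmu hmw (hmax' u humem) (hmax' w hwmem))

end FareyTree

section Triangle
open SimpleGraph Walk

variable {N : ℕ}

lemma triangle_cycle (hN1 : 1 < N) (hNodd : Odd N) :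
    ∃ (v : X N) (c : (FareyGraph N).Walk v v), c.IsCycle := by
  have hN0 : ((N : ℤ)) ≠ 0 := by exact_mod_cast (by omega : (N : ℤ) ≠ 0)
  obtain ⟨k, hk⟩ : Odd (N : ℤ) := by exact_mod_cast hNodd
  have hmem1 : memX N ((1 : ℤ), (N : ℤ)) :=
    ⟨by positivity, isCoprime_one_left, dvd_refl _, fun h => absurd h hN0⟩
  have hmem2 : memX N ((2 : ℤ), (N : ℤ)) := by
    refine ⟨by positivity, ⟨-k, 1, by show -k * 2 + 1 * (N:ℤ) = 1; linarith⟩, dvd_refl _, fun h => absurd h hN0⟩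
  set v0 : X N := infty N with hv0
  set v1 : X N := ⟨(1, (N : ℤ)), hmem1⟩ with hv1
  set v2 : X N := ⟨(2, (N : ℤ)), hmem2⟩ with hv2
  have hne01 : v0 ≠ v1 := by
    intro h
    have : ((0 : ℤ)) = (N : ℤ) := congrArg (fun x : X N => x.1.2) h
    exact hN0 this.symm
  have hne12 : v1 ≠ v2 := by
    intro h
    have : ((1 : ℤ)) = 2 := congrArg (fun x : X N => x.1.1) h
    norm_num at this
  have hne20 : v2 ≠ v0 := by
    intro h
    have : ((N : ℤ)) = 0 := congrArg (fun x : X N => x.1.2) h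
    exact hN0 this
  have h01 : (FareyGraph N).Adj v0 v1 := by
    refine ⟨hne01, Or.inr ?_⟩
    show (1 : ℤ) * 0 - (N : ℤ) * 1 = -(N : ℤ)
    ring
  have h12 : (FareyGraph N).Adj v1 v2 := by
    refine ⟨hne12, Or.inl ?_⟩
    show (2 : ℤ) * (N : ℤ) - (N : ℤ) * 1 = (N : ℤ)
    ring
  have h20 : (FareyGraph N).Adj v2 v0 := by
    refine ⟨hne20, Or.inl ?_⟩
    show (1 : ℤ) * (N : ℤ) - 0 * 2 = (N : ℤ)
    ring
  have hne10 : v1 ≠ v0 := hne01.symm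
  have hne21 : v2 ≠ v1 := hne12.symm
  have hne02 : v0 ≠ v2 := hne20.symm
  refine ⟨v0, Walk.cons h01 (Walk.cons h12 (Walk.cons h20 Walk.nil)), ?_⟩
  rw [Walk.isCycle_def]
  refine ⟨?_, by simp, ?_⟩
  · rw [Walk.isTrail_def]
    simp only [Walk.edges_cons, Walk.edges_nil]
    simp [List.nodup_cons, Sym2.eq_iff]
    tauto
  · simp only [Walk.support_cons, Walk.support_nil, List.tail_cons]
    simp [List.nodup_cons]
    tauto
end Triangle

/-- For every `l ∈ ℕ` (`l ≥ 1`), the graph `F_{2^l}` is a tree,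
whereas for every odd prime `p` and every `l ≥ 1`, the graph `F_{p^l}` is not a
tree: it contains a cycle. -/
theorem stmt4 :
    (∀ l : ℕ, 1 ≤ l → (FareyGraph (2 ^ l)).IsTree) ∧
    (∀ p l : ℕ, p.Prime → p ≠ 2 → 1 ≤ l →
      ¬ (FareyGraph (p ^ l)).IsTree ∧ ¬ (FareyGraph (p ^ l)).IsAcyclic) := by
  constructor
  · intro l hl
    exact ⟨FareyTree.connected hl, FareyTree.acyclic hl⟩
  · intro p l hp hp2 hl
    have h1 : 1 < p ^ l := Nat.one_lt_pow (by omega) hp.one_lt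
    have hodd : Odd (p ^ l) := (hp.odd_of_ne_two hp2).pow
    obtain ⟨v, c, hc⟩ := triangle_cycle h1 hodd
    have hnotacyc : ¬ (FareyGraph (p ^ l)).IsAcyclic := fun h => h c hc
    exact ⟨fun ht => hnotacyc ht.IsAcyclic, hnotacyc⟩
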